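/- If (X_n) is a sequence of infinite-dimensional Banach spaces with T(X_i) = 1 for at least one index i, then for 1 ≤ p < ∞, T(ℓ_p(X_n)) = 2^{1/p}. In particular T(ℓ_2(c_0)) = √2. -/

import Mathlib

open scoped ENNReal NNReal

/-- The thickness constant `T(X)`: the infimum of `ε > 0` such that finitely many closed
`ε`-balls centered at unit vectors cover the closed unit ball of `X`. -/
noncomputable def thickness (X : Type*) [NormedAddCommGroup X] : ℝ :=
  sInf {ε : ℝ | 0 < ε ∧ ∃ F : Finset X, (∀ x ∈ F, ‖x‖ = 1) ∧
    ∀ y : X, ‖y‖ ≤ 1 → ∃ x ∈ F, ‖y - x‖ ≤ ε}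

/-- Whitley's thickness constant `T_W(X)`: the infimum of `ε > 0` such that there is a finite
`ε`-net consisting of unit vectors for the unit sphere of `X`. -/
noncomputable def whitleyThickness (X : Type*) [NormedAddCommGroup X] : ℝ :=
  sInf {ε : ℝ | 0 < ε ∧ ∃ F : Finset X, (∀ x ∈ F, ‖x‖ = 1) ∧
    ∀ y : X, ‖y‖ = 1 → ∃ x ∈ F, ‖y - x‖ ≤ ε}

open scoped ZeroAtInfty
open Filter Topology

/-! ### Auxiliary definitions and lemmas -/

/-- The set whose infimum is the thickness constant. -/
def thickSet (X : Type*) [NormedAddCommGroup X] : Set ℝ :=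
  {ε : ℝ | 0 < ε ∧ ∃ F : Finset X, (∀ x ∈ F, ‖x‖ = 1) ∧
    ∀ y : X, ‖y‖ ≤ 1 → ∃ x ∈ F, ‖y - x‖ ≤ ε}

lemma thickness_eq_sInf (X : Type*) [NormedAddCommGroup X] :
    thickness X = sInf (thickSet X) := rfl

lemma norm_lp_single {p : ℝ≥0∞} [Fact (1 ≤ p)] (hpr : 0 < p.toReal)
    {E : ℕ → Type*} [∀ n, NormedAddCommGroup (E n)] (j : ℕ) (a : E j) :
    ‖lp.single p j a‖ = ‖a‖ := by
  have := lp.norm_single (p := p) (E := E) (x := a) (i := j) (zero_lt_one.trans_le Fact.out)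
  simpa using this

/-- Coordinatewise formula for the `p`-th power of the norm of `y - single j a`. -/
lemma lp_sub_single_norm {p : ℝ≥0∞} [Fact (1 ≤ p)] (hpr : 0 < p.toReal)
    {E : ℕ → Type*} [∀ n, NormedAddCommGroup (E n)]
    (y : lp E p) (j : ℕ) (a : E j) :
    ‖y - lp.single p j a‖ ^ p.toReal
      = ‖y j - a‖ ^ p.toReal + ∑' n, (if n = j then 0 else ‖y n‖ ^ p.toReal) := by
  have hs := (lp.hasSum_norm hpr (y - lp.single p j a)).summable
  rw [lp.norm_rpow_eq_tsum hpr, Summable.tsum_eq_add_tsum_ite hs j]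
  congr 1
  · simp [lp.coeFn_sub, lp.single_apply_self]
  · refine tsum_congr fun n => ?_
    by_cases h : n = j
    · simp [h]
    · simp [h, lp.coeFn_sub, lp.single_apply_ne p j a h]

lemma two_mem_thickSet {X : Type*} [NormedAddCommGroup X] {u : X} (hu : ‖u‖ = 1) :
    (2 : ℝ) ∈ thickSet X := by
  refine ⟨two_pos, {u}, by simp [hu], fun y hy => ⟨u, by simp, ?_⟩⟩
  calc ‖y - u‖ ≤ ‖y‖ + ‖u‖ := norm_sub_le _ _
    _ ≤ 2 := by rw [hu]; linarith

lemma exists_unit_of_not_finiteDimensional {X : Type*} [NormedAddCommGroup X]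
    [NormedSpace ℝ X] (h : ¬ FiniteDimensional ℝ X) : ∃ u : X, ‖u‖ = 1 := by
  have hnt : Nontrivial X := by
    by_contra hn
    rw [not_nontrivial_iff_subsingleton] at hn
    exact h inferInstance
  obtain ⟨x, hx⟩ := exists_ne (0 : X)
  exact ⟨‖x‖⁻¹ • x, by
    rw [norm_smul, norm_inv, norm_norm, inv_mul_cancel₀ (norm_ne_zero_iff.2 hx)]⟩

/-- Main computation: if the `i`-th factor admits finite unit nets with constants arbitrarily
close to `1`, and all factors contain unit vectors, then `T(ℓ_p(E)) = 2^(1/p)`. -/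
lemma thickness_lp_main (p : ℝ≥0∞) [Fact (1 ≤ p)] (hp : p ≠ ⊤)
    (E : ℕ → Type*) [∀ n, NormedAddCommGroup (E n)]
    (hu : ∀ n, ∃ u : E n, ‖u‖ = 1) (i : ℕ)
    (hnet : ∀ δ : ℝ, 0 < δ → ∃ ε ∈ thickSet (E i), ε ≤ 1 + δ) :
    thickness (lp E p) = 2 ^ (1 / p.toReal) := by
  have fact1 : (1 : ℝ≥0∞) ≤ p := Fact.out
  set pr := p.toReal with hprdef
  have hpr1 : (1 : ℝ) ≤ pr := by
    rw [hprdef, ← ENNReal.toReal_one]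
    exact ENNReal.toReal_mono hp fact1
  have hpr0 : 0 < pr := lt_of_lt_of_le one_pos hpr1
  have hp0 : p ≠ 0 := (zero_lt_one.trans_le fact1).ne'
  -- Step 1: upper-bound elements of the thickness set of the sum.
  have upper_mem : ∀ ε0 ∈ thickSet (E i),
      (ε0 ^ pr + 1) ^ (1 / pr) ∈ thickSet (lp E p) := by
    rintro ε0 ⟨hε0, F0, hF0unit, hF0cov⟩
    classical
    refine ⟨by positivity, F0.image (lp.single p i), ?_, ?_⟩
    · intro x hx
      obtain ⟨a, ha, rfl⟩ := Finset.mem_image.1 hx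
      rw [norm_lp_single hpr0]
      exact hF0unit a ha
    · intro y hy
      have hyi : ‖y i‖ ≤ 1 := (lp.norm_apply_le_norm hp0 y i).trans hy
      obtain ⟨a, haF, hya⟩ := hF0cov (y i) hyi
      refine ⟨lp.single p i a, Finset.mem_image_of_mem _ haF, ?_⟩
      have key := lp_sub_single_norm hpr0 y i a
      have hterm : ∑' n, (if n = i then 0 else ‖y n‖ ^ pr) ≤ 1 := by
        have hsum := (lp.hasSum_norm hpr0 y).summable
        have h1 : ∑' n, (if n = i then 0 else ‖y n‖ ^ pr) ≤ ∑' n, ‖y n‖ ^ pr := by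
          refine Summable.tsum_le_tsum (fun n => ?_) ?_ hsum
          · split
            · positivity
            · exact le_rfl
          · refine Summable.of_nonneg_of_le (fun n => ?_) (fun n => ?_) hsum
            · split <;> positivity
            · split <;> [positivity; exact le_rfl]
        have h2 : ∑' n, ‖y n‖ ^ pr = ‖y‖ ^ pr := (lp.norm_rpow_eq_tsum hpr0 y).symm
        have h3 : ‖y‖ ^ pr ≤ 1 := Real.rpow_le_one (norm_nonneg _) hy hpr0.le
        linarith
      have hnorm_pow : ‖y - lp.single p i a‖ ^ pr ≤ ε0 ^ pr + 1 := by
        rw [key]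
        have : ‖y i - a‖ ^ pr ≤ ε0 ^ pr :=
          Real.rpow_le_rpow (norm_nonneg _) hya hpr0.le
        linarith
      calc ‖y - lp.single p i a‖ = (‖y - lp.single p i a‖ ^ pr) ^ (1 / pr) := by
            rw [one_div, Real.rpow_rpow_inv (norm_nonneg _) hpr0.ne']
        _ ≤ (ε0 ^ pr + 1) ^ (1 / pr) :=
            Real.rpow_le_rpow (by positivity) hnorm_pow (by positivity)
  -- Step 2: lower bound for all elements of the thickness set of the sum.
  have lower_mem : ∀ ε ∈ thickSet (lp E p), 2 ^ (1 / pr) ≤ ε := by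
    rintro ε ⟨hε, F, hFunit, hFcov⟩
    have key : ∀ δ : ℝ, δ ∈ Set.Ioo (0 : ℝ) 1 →
        (1 - δ) ^ pr + (1 - δ ^ pr) ≤ ε ^ pr := by
      rintro δ ⟨hδ0, hδ1⟩
      have htail : ∀ x ∈ F, ∀ᶠ n in atTop, ‖(x : lp E p) n‖ < δ := by
        intro x hx
        have hsum := (lp.hasSum_norm hpr0 x).summable
        have h0 : Tendsto (fun n => ‖x n‖ ^ pr) atTop (𝓝 0) := hsum.tendsto_atTop_zero
        have h1 : Tendsto (fun n => (‖x n‖ ^ pr) ^ (1 / pr)) atTop (𝓝 ((0 : ℝ) ^ (1 / pr))) :=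
          (Real.continuousAt_rpow_const 0 (1 / pr) (Or.inr (by positivity))).tendsto.comp h0
        have h2 : (fun n => (‖x n‖ ^ pr) ^ (1 / pr)) = fun n => ‖x n‖ := by
          funext n; rw [one_div, Real.rpow_rpow_inv (norm_nonneg _) hpr0.ne']
        rw [h2, Real.zero_rpow (by positivity)] at h1
        exact h1.eventually_lt_const hδ0
      have hall : ∀ᶠ n in atTop, ∀ x ∈ F, ‖(x : lp E p) n‖ < δ :=
        (eventually_all_finset F).2 htail
      obtain ⟨N, hN⟩ := hall.exists
      obtain ⟨u, hu1⟩ := hu N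
      have hynorm : ‖lp.single p N u‖ = 1 := by rw [norm_lp_single hpr0, hu1]
      obtain ⟨x, hxF, hyx⟩ := hFcov (lp.single p N u) hynorm.le
      have key2 := lp_sub_single_norm hpr0 x N u
      have hxsum : ∑' n, ‖x n‖ ^ pr = 1 := by
        rw [← lp.norm_rpow_eq_tsum hpr0 x, hFunit x hxF, Real.one_rpow]
      have hsplit : ∑' n, (if n = N then 0 else ‖x n‖ ^ pr) = 1 - ‖x N‖ ^ pr := by
        have h := Summable.tsum_eq_add_tsum_ite (lp.hasSum_norm hpr0 x).summable N
        rw [hxsum] at h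
        linarith
      have hxN : ‖x N‖ ^ pr ≤ δ ^ pr :=
        Real.rpow_le_rpow (norm_nonneg _) (hN x hxF).le hpr0.le
      have hd : (1 - δ) ^ pr ≤ ‖x N - u‖ ^ pr := by
        refine Real.rpow_le_rpow (by linarith) ?_ hpr0.le
        have h1 : ‖u‖ - ‖x N‖ ≤ ‖u - x N‖ := norm_sub_norm_le u (x N)
        rw [norm_sub_rev] at h1
        have h2 : ‖x N‖ ≤ δ := (hN x hxF).le
        linarith [hu1 ▸ h1]
      have hεx : ‖x - lp.single p N u‖ ^ pr ≤ ε ^ pr := by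
        refine Real.rpow_le_rpow (norm_nonneg _) ?_ hpr0.le
        rw [norm_sub_rev]
        exact hyx
      rw [key2, hsplit] at hεx
      linarith
    have hlim : Tendsto (fun δ : ℝ => (1 - δ) ^ pr + (1 - δ ^ pr)) (𝓝[>] (0 : ℝ)) (𝓝 2) := by
      have h1 : ContinuousAt (fun δ : ℝ => (1 - δ) ^ pr) 0 :=
        (continuousAt_const.sub continuousAt_id).rpow_const (Or.inr hpr0.le)
      have h2 : ContinuousAt (fun δ : ℝ => δ ^ pr) 0 :=
        continuousAt_id.rpow_const (Or.inr hpr0.le)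
      have h3 : ContinuousAt (fun δ : ℝ => (1 - δ) ^ pr + (1 - δ ^ pr)) 0 :=
        h1.add (continuousAt_const.sub h2)
      have h4 := h3.tendsto.mono_left
        (nhdsWithin_le_nhds : 𝓝[>] (0 : ℝ) ≤ 𝓝 0)
      have h5 : (1 - (0:ℝ)) ^ pr + (1 - (0:ℝ) ^ pr) = 2 := by
        rw [sub_zero, Real.one_rpow, Real.zero_rpow hpr0.ne']
        norm_num
      rwa [h5] at h4
    have h2le : (2 : ℝ) ≤ ε ^ pr := by
      refine le_of_tendsto hlim ?_
      filter_upwards [Ioo_mem_nhdsGT_of_mem (Set.mem_Ico.2 ⟨le_refl 0, one_pos⟩)] with δ hδ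
      exact key δ hδ
    calc (2 : ℝ) ^ (1 / pr) ≤ (ε ^ pr) ^ (1 / pr) :=
          Real.rpow_le_rpow (by norm_num) h2le (by positivity)
      _ = ε := by rw [one_div, Real.rpow_rpow_inv hε.le hpr0.ne']
  -- Step 3: combine.
  have hSbdd : BddBelow (thickSet (lp E p)) := ⟨0, fun ε hε => hε.1.le⟩
  have hSnonempty : (thickSet (lp E p)).Nonempty := by
    obtain ⟨ε0, hε0S, _⟩ := hnet 1 one_pos
    exact ⟨_, upper_mem ε0 hε0S⟩
  rw [thickness_eq_sInf]
  refine le_antisymm ?_ (le_csInf hSnonempty lower_mem)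
  have hub : ∀ δ : ℝ, 0 < δ →
      sInf (thickSet (lp E p)) ≤ ((1 + δ) ^ pr + 1) ^ (1 / pr) := by
    intro δ hδ
    obtain ⟨ε0, hε0S, hε0le⟩ := hnet δ hδ
    have h1 : sInf (thickSet (lp E p)) ≤ (ε0 ^ pr + 1) ^ (1 / pr) :=
      csInf_le hSbdd (upper_mem ε0 hε0S)
    have hε0pos := hε0S.1
    refine h1.trans (Real.rpow_le_rpow (by positivity) ?_ (by positivity))
    have : ε0 ^ pr ≤ (1 + δ) ^ pr := Real.rpow_le_rpow hε0S.1.le hε0le hpr0.le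
    linarith
  have hlim2 : Tendsto (fun δ : ℝ => ((1 + δ) ^ pr + 1) ^ (1 / pr)) (𝓝[>] (0 : ℝ))
      (𝓝 (2 ^ (1 / pr))) := by
    have hin : ContinuousAt (fun δ : ℝ => (1 + δ) ^ pr + 1) 0 :=
      ((continuousAt_const.add continuousAt_id).rpow_const (Or.inr hpr0.le)).add continuousAt_const
    have hcont : ContinuousAt (fun δ : ℝ => ((1 + δ) ^ pr + 1) ^ (1 / pr)) 0 :=
      hin.rpow_const (Or.inr (by positivity))
    have h := hcont.tendsto.mono_left (nhdsWithin_le_nhds : 𝓝[>] (0 : ℝ) ≤ 𝓝 0)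
    have h5 : ((1 + (0:ℝ)) ^ pr + 1) ^ (1 / pr) = 2 ^ (1 / pr) := by
      rw [add_zero, Real.one_rpow]
      norm_num
    rwa [h5] at h
  refine ge_of_tendsto hlim2 ?_
  filter_upwards [self_mem_nhdsWithin] with δ hδ
  exact hub δ hδ

/-! ### The space `c₀ = C₀(ℕ, ℝ)` -/

/-- The `N`-th "unit basis vector" of `c₀`. -/
noncomputable def eBasis (N : ℕ) : C₀(ℕ, ℝ) :=
  ⟨⟨fun n => if n = N then 1 else 0, continuous_of_discreteTopology⟩, by
    rw [cocompact_eq_atTop]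
    refine tendsto_nhds_of_eventually_eq ?_
    filter_upwards [eventually_gt_atTop N] with n hn
    simp [hn.ne']⟩

lemma eBasis_apply (N n : ℕ) : eBasis N n = if n = N then 1 else 0 := rfl

lemma c0_norm_le (f : C₀(ℕ, ℝ)) {C : ℝ} (hC : 0 ≤ C) (h : ∀ n, |f n| ≤ C) : ‖f‖ ≤ C := by
  rw [← ZeroAtInftyContinuousMap.norm_toBCF_eq_norm]
  exact (BoundedContinuousFunction.norm_le hC).2 h

lemma c0_le_norm (f : C₀(ℕ, ℝ)) (n : ℕ) : |f n| ≤ ‖f‖ := by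
  rw [← ZeroAtInftyContinuousMap.norm_toBCF_eq_norm]
  exact BoundedContinuousFunction.norm_coe_le_norm f.toBCF n

lemma norm_eBasis (N : ℕ) : ‖eBasis N‖ = 1 := by
  refine le_antisymm (c0_norm_le _ zero_le_one fun n => ?_) ?_
  · rw [eBasis_apply]; split <;> norm_num
  · have := c0_le_norm (eBasis N) N
    simpa [eBasis_apply] using this

lemma one_mem_thickSet_c0 : (1 : ℝ) ∈ thickSet C₀(ℕ, ℝ) := by
  classical
  refine ⟨one_pos, {eBasis 0, -eBasis 0}, ?_, ?_⟩
  · intro x hx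
    rcases Finset.mem_insert.1 hx with rfl | hx
    · exact norm_eBasis 0
    · rw [Finset.mem_singleton.1 hx, norm_neg]
      exact norm_eBasis 0
  · intro y hy
    have hy0 : |y 0| ≤ 1 := (c0_le_norm y 0).trans hy
    rw [abs_le] at hy0
    rcases le_or_gt 0 (y 0) with h0 | h0
    · refine ⟨eBasis 0, by simp, c0_norm_le _ zero_le_one fun n => ?_⟩
      have hn : |y n| ≤ 1 := (c0_le_norm y n).trans hy
      rw [abs_le] at hn
      have he : (y - eBasis 0) n = y n - eBasis 0 n := by simp
      rcases eq_or_ne n 0 with rfl | hne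
      · rw [he, eBasis_apply, if_pos rfl, abs_le]
        constructor <;> linarith
      · rw [he, eBasis_apply, if_neg hne, abs_le]
        constructor <;> linarith
    · refine ⟨-eBasis 0, by simp, c0_norm_le _ zero_le_one fun n => ?_⟩
      have hn : |y n| ≤ 1 := (c0_le_norm y n).trans hy
      rw [abs_le] at hn
      have he : (y - -eBasis 0) n = y n + eBasis 0 n := by simp
      rcases eq_or_ne n 0 with rfl | hne
      · rw [he, eBasis_apply, if_pos rfl, abs_le]
        constructor <;> linarith
      · rw [he, eBasis_apply, if_neg hne, abs_le]
        constructor <;> linarith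

/-- if some factor has thickness 1, then `T(ℓ_p(X_n)) = 2^{1/p}` for
`1 ≤ p < ∞`; in particular `T(ℓ_2(c_0)) = √2`. -/
theorem thickness_lp_of_exists_factor_one
    (p : ℝ≥0∞) [Fact (1 ≤ p)] (hp : p ≠ ⊤)
    (E : ℕ → Type*) [∀ n, NormedAddCommGroup (E n)] [∀ n, NormedSpace ℝ (E n)]
    [∀ n, CompleteSpace (E n)] (hinf : ∀ n, ¬ FiniteDimensional ℝ (E n))
    (i : ℕ) (hi : thickness (E i) = 1) :
    thickness (lp E p) = 2 ^ (1 / p.toReal) ∧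
    thickness (lp (fun _ : ℕ => C₀(ℕ, ℝ)) 2) = Real.sqrt 2 := by
  constructor
  · refine thickness_lp_main p hp E (fun n => exists_unit_of_not_finiteDimensional (hinf n)) i ?_
    intro δ hδ
    have hne : (thickSet (E i)).Nonempty := by
      obtain ⟨u, hu⟩ := exists_unit_of_not_finiteDimensional (hinf i)
      exact ⟨2, two_mem_thickSet hu⟩
    have hlt : sInf (thickSet (E i)) < 1 + δ := by
      rw [← thickness_eq_sInf, hi]; linarith
    obtain ⟨ε, hεS, hεlt⟩ := exists_lt_of_csInf_lt hne hlt
    exact ⟨ε, hεS, hεlt.le⟩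
  · haveI : Fact ((1 : ℝ≥0∞) ≤ 2) := ⟨one_le_two⟩
    have h := thickness_lp_main 2 (by norm_num) (fun _ : ℕ => C₀(ℕ, ℝ))
      (fun _ => ⟨eBasis 0, norm_eBasis 0⟩) 0
      (fun δ hδ => ⟨1, one_mem_thickSet_c0, by linarith⟩)
    rw [h]
    rw [show ((2 : ℝ≥0∞).toReal) = 2 by simp, Real.sqrt_eq_rpow]
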